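/- Let X = ℓ∞ be the real Banach space of bounded real sequences with the supremum norm. Let (ε_n)_{n≥1} be a sequence with 1 ≥ ε_1 ≥ ε_2 ≥ ⋯ ≥ 0 and ε_n → 0. Then there exists an approximation scheme (A_n) in X such that dens_n = E(S(X), A_n) ≤ ε_n for every n ≥ 1, and there exists x ∈ X with ‖x‖ = 1 such that E(x, A_n) ≥ ε_n/(1 + ε_n) (in particular E(x, A_n) ≥ ε_n/2) for every n ≥ 1. -/

import Mathlib

open Metric Filter

/-- `(A n)` together with the map `K` is an approximation scheme in `X`. -/
structure IsApproximationScheme {X : Type*} [NormedAddCommGroup X] [NormedSpace ℝ X]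
    (A : ℕ → Set X) (K : ℕ → ℕ) : Prop where
  subset_succ : ∀ n, A n ⊆ A (n + 1)
  ne_succ : ∀ n, A n ≠ A (n + 1)
  le_K : ∀ n, n ≤ K n
  add_mem : ∀ n, ∀ x ∈ A n, ∀ y ∈ A n, x + y ∈ A (K n)
  smul_mem : ∀ n (c : ℝ), ∀ x ∈ A n, c • x ∈ A n
  dense_union : Dense (⋃ n, A n)

/-- `(X, (A n))` satisfies Shapiro's Theorem: for every nonincreasing positive sequence
`ε` converging to `0` there is `x` with `E(x, A n) ≠ O(ε n)`. -/
def SatisfiesShapiro {X : Type*} [NormedAddCommGroup X] (A : ℕ → Set X) : Prop :=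
  ∀ ε : ℕ → ℝ, (∀ n, 0 < ε n) → Antitone ε → Tendsto ε atTop (nhds 0) →
    ∃ x : X, ¬ ∃ M : ℝ, ∀ n, infDist x (A n) ≤ M * ε n

/-- `E(B, A) = sup_{b ∈ B} E(b, A)`. -/
noncomputable def setApproxError {X : Type*} [NormedAddCommGroup X] (B A : Set X) : ℝ :=
  ⨆ b : B, infDist (b : X) A

/-- `dens_n`-style quantity: `E(S(X), A) = sup_{‖x‖ = 1} E(x, A)`. -/
noncomputable def sphDist {X : Type*} [NormedAddCommGroup X] (A : Set X) : ℝ :=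
  ⨆ x : {x : X // ‖x‖ = 1}, infDist (x : X) A

namespace Stmt12Aux

open ENNReal


noncomputable section

abbrev LY := lp (fun _ : ℕ => ℝ) ∞

/-- junk vectors carrying strictness -/
def wf (i k : ℕ) : ℝ := (1 / ((k : ℝ) + 2)) ^ (i + 1)

lemma wf_abs_le (i k : ℕ) : |wf i k| ≤ 1 := by
  have h2 : (0:ℝ) < (k:ℝ) + 2 := by positivity
  rw [wf, abs_of_nonneg (by positivity)]
  apply pow_le_one₀ (by positivity)
  rw [div_le_one h2]; linarith

def NN (ε : ℕ → ℝ) (n : ℕ) : ℕ := if 0 < ε n then ⌈1 / ε n⌉₊ else 0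

lemma NN_pos {ε : ℕ → ℝ} {n : ℕ} (h : 0 < ε n) : 1 ≤ NN ε n := by
  rw [NN, if_pos h, Nat.one_le_ceil_iff]; positivity

lemma NN_eq_zero {ε : ℕ → ℝ} {n : ℕ} (hnonneg : ∀ m, 0 ≤ ε m) (h : NN ε n = 0) : ε n = 0 := by
  by_contra hne
  have : 0 < ε n := lt_of_le_of_ne (hnonneg n) (Ne.symm hne)
  exact absurd h (by have := NN_pos (ε := ε) this; omega)

lemma NN_ne_zero_pos {ε : ℕ → ℝ} {n : ℕ} (h : NN ε n ≠ 0) : 0 < ε n := by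
  by_contra hne
  simp [NN, hne] at h

lemma NN_cast_ge {ε : ℕ → ℝ} {n : ℕ} (h : 0 < ε n) : 1 / ε n ≤ (NN ε n : ℝ) := by
  rw [NN, if_pos h]; exact Nat.le_ceil _

lemma one_div_NN_le {ε : ℕ → ℝ} {n : ℕ} (h : 0 < ε n) : 1 / (NN ε n : ℝ) ≤ ε n := by
  have h1 : (0:ℝ) < 1 / ε n := by positivity
  have h2 := NN_cast_ge h
  calc 1 / (NN ε n : ℝ) ≤ 1 / (1 / ε n) := by
        apply one_div_le_one_div_of_le h1 h2
    _ = ε n := one_div_one_div _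

lemma NN_zero_mono {ε : ℕ → ℝ} (hnonneg : ∀ m, 0 ≤ ε m) (hmono : Antitone ε) {n m : ℕ}
    (h : n ≤ m) (h0 : NN ε n = 0) : NN ε m = 0 := by
  have h1 : ε n = 0 := NN_eq_zero hnonneg h0
  have h2 : ε m = 0 := le_antisymm (h1 ▸ hmono h) (hnonneg m)
  simp [NN, h2]

lemma NN_le_NN {ε : ℕ → ℝ} (hnonneg : ∀ m, 0 ≤ ε m) (hmono : Antitone ε) {n m : ℕ}
    (h : n ≤ m) (hm : NN ε m ≠ 0) : NN ε n ≤ NN ε m := by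
  have hmpos : 0 < ε m := NN_ne_zero_pos hm
  have hnpos : 0 < ε n := lt_of_lt_of_le hmpos (hmono h)
  rw [NN, if_pos hnpos, NN, if_pos hmpos]
  exact Nat.ceil_le_ceil (one_div_le_one_div_of_le hmpos (hmono h))

/-- condition on even coordinates: at most `N` values (`N = 0` means no bound) -/
def PCond (N : ℕ) (f : ℕ → ℝ) : Prop :=
  ∃ S : Finset ℝ, (N ≠ 0 → S.card ≤ N) ∧ ∀ k, f (2 * k) ∈ S

/-- condition on odd coordinates: finitely many values modulo `span (wf 0, …, wf (n-1))` -/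
def QCond (n : ℕ) (f : ℕ → ℝ) : Prop :=
  ∃ (S : Finset ℝ) (c : ℕ → ℝ), (∀ i, n ≤ i → c i = 0) ∧
    ∀ k, f (2 * k + 1) - ∑ i ∈ Finset.range n, c i * wf i k ∈ S

def Aset (ε : ℕ → ℝ) (n : ℕ) : Set LY := {y | PCond (NN ε n) ⇑y ∧ QCond n ⇑y}

lemma qcond_sum_eq {n m : ℕ} (h : n ≤ m) (c : ℕ → ℝ) (hc : ∀ i, n ≤ i → c i = 0) (k : ℕ) :
    ∑ i ∈ Finset.range m, c i * wf i k = ∑ i ∈ Finset.range n, c i * wf i k := by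
  refine (Finset.sum_subset (Finset.range_subset_range.2 h) ?_).symm
  intro i _ hi
  rw [hc i (by simpa using hi), zero_mul]

lemma Aset_subset {ε : ℕ → ℝ} (hnonneg : ∀ m, 0 ≤ ε m) (hmono : Antitone ε) {n m : ℕ}
    (h : n ≤ m) : Aset ε n ⊆ Aset ε m := by
  rintro y ⟨⟨S, hcard, hmem⟩, ⟨T, c, hc0, hcmem⟩⟩
  refine ⟨⟨S, fun h0 => ?_, hmem⟩, ⟨T, c, fun i hi => hc0 i (le_trans h hi), fun k => ?_⟩⟩
  · have hn0 : NN ε n ≠ 0 := by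
      intro hz; exact h0 (NN_zero_mono hnonneg hmono h hz)
    exact le_trans (hcard hn0) (NN_le_NN hnonneg hmono h h0)
  · rw [qcond_sum_eq h c hc0]; exact hcmem k

lemma mem_Aset_of_finset {ε : ℕ → ℝ} {n : ℕ} (z : LY) (S : Finset ℝ)
    (hcard : NN ε n ≠ 0 → S.card ≤ NN ε n) (hz : ∀ j, (⇑z) j ∈ S) : z ∈ Aset ε n := by
  refine ⟨⟨S, hcard, fun k => hz _⟩, ⟨S, 0, fun i _ => rfl, fun k => ?_⟩⟩
  simp only [Pi.zero_apply, zero_mul, Finset.sum_const_zero, sub_zero]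
  exact hz _

lemma zero_mem_Aset {ε : ℕ → ℝ} {n : ℕ} : (0 : LY) ∈ Aset ε n := by
  refine mem_Aset_of_finset 0 {0} (fun h => by simp [Nat.one_le_iff_ne_zero.2 h]) ?_
  intro j; rw [lp.coeFn_zero]; simp




/-- index of the grid point: `min (N-1) ⌊(t+1)N/2⌋` -/
def rIdx (N : ℕ) (t : ℝ) : ℕ := min (N - 1) ⌊(t + 1) * N / 2⌋₊

def rVal (N : ℕ) (t : ℝ) : ℝ := -1 + (2 * (rIdx N t : ℝ) + 1) / N

lemma rIdx_lt (N : ℕ) (hN : 1 ≤ N) (t : ℝ) : rIdx N t < N :=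
  lt_of_le_of_lt (min_le_left _ _) (by omega)

lemma cast_pred (N : ℕ) (hN : 1 ≤ N) : ((N - 1 : ℕ) : ℝ) = (N:ℝ) - 1 := by
  have : ((1:ℕ):ℝ) = 1 := by norm_num
  rw [Nat.cast_sub hN, this]

lemma abs_rVal_le (N : ℕ) (hN : 1 ≤ N) (t : ℝ) : |rVal N t| ≤ 1 := by
  have hNpos : (0:ℝ) < N := by exact_mod_cast hN
  have hm : (rIdx N t : ℝ) ≤ (N:ℝ) - 1 := by
    have h' : rIdx N t ≤ N - 1 := min_le_left _ _
    calc (rIdx N t : ℝ) ≤ ((N - 1 : ℕ) : ℝ) := by exact_mod_cast h'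
      _ = (N:ℝ) - 1 := cast_pred N hN
  have hm0 : (0:ℝ) ≤ (rIdx N t : ℝ) := Nat.cast_nonneg _
  rw [abs_le, rVal]
  constructor
  · have : (0:ℝ) < (2 * (rIdx N t : ℝ) + 1) / N := by positivity
    linarith
  · have : (2 * (rIdx N t : ℝ) + 1) / N ≤ 2 := by
      rw [div_le_iff₀ hNpos]; linarith
    linarith

lemma abs_sub_rVal (N : ℕ) (hN : 1 ≤ N) {t : ℝ} (h1 : -1 ≤ t) (h2 : t ≤ 1) :
    |t - rVal N t| ≤ 1 / N := by
  have hNpos : (0:ℝ) < N := by exact_mod_cast hN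
  set s : ℝ := (t + 1) * N / 2 with hs
  have hs0 : 0 ≤ s := by
    apply div_nonneg (mul_nonneg (by linarith) hNpos.le) (by norm_num)
  have hsN : s ≤ N := by
    rw [hs, div_le_iff₀ (by norm_num : (0:ℝ) < 2)]
    nlinarith
  have ht : t = 2 * s / N - 1 := by
    rw [hs]; field_simp; ring
  rcases le_or_gt ⌊s⌋₊ (N - 1) with h | h
  · have hidx : rIdx N t = ⌊s⌋₊ := min_eq_right h
    have hfl : (⌊s⌋₊ : ℝ) ≤ s := Nat.floor_le hs0
    have hfu : s < (⌊s⌋₊ : ℝ) + 1 := Nat.lt_floor_add_one s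
    have heq : t - rVal N t = (2 * s - 2 * (⌊s⌋₊:ℝ) - 1) / N := by
      rw [rVal, hidx, ht]; field_simp; ring
    rw [heq, abs_div, abs_of_pos hNpos, div_le_div_iff_of_pos_right hNpos]
    rw [abs_le]; constructor <;> linarith
  · have hNle : N ≤ ⌊s⌋₊ := by omega
    have hsge : (N:ℝ) ≤ s := le_trans (by exact_mod_cast hNle) (Nat.floor_le hs0)
    have hseq : s = N := le_antisymm hsN hsge
    have ht1 : t = 1 := by rw [ht, hseq]; field_simp; norm_num
    have hidx : rIdx N t = N - 1 := min_eq_left (le_of_lt h)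
    have : t - rVal N t = 1 / N := by
      rw [rVal, hidx, cast_pred N hN, ht1]; field_simp; ring
    rw [this, abs_of_pos (by positivity)]


lemma exists_approx (y : LY) (R : ℝ) (hR : 0 < R) (hy : ∀ j, |(⇑y) j| ≤ R)
    (N : ℕ) (hN : 1 ≤ N) :
    ∃ (z : LY) (S : Finset ℝ), S.card ≤ N ∧ (∀ j, (⇑z) j ∈ S) ∧ dist y z ≤ R / N := by
  have hNpos : (0:ℝ) < N := by exact_mod_cast hN
  set g : ℕ → ℝ := fun j => R * rVal N ((⇑y) j / R) with hg
  have hgb : ∀ j, ‖g j‖ ≤ R := by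
    intro j
    rw [hg]; simp only [Real.norm_eq_abs, abs_mul, abs_of_pos hR]
    have h1 := abs_rVal_le N hN ((⇑y) j / R)
    nlinarith [abs_nonneg (rVal N ((⇑y) j / R))]
  have hmem : Memℓp g ∞ := memℓp_infty ⟨R, by rintro - ⟨j, rfl⟩; exact hgb j⟩
  refine ⟨⟨g, hmem⟩, (Finset.range N).image (fun m : ℕ => R * (-1 + (2 * (m:ℝ) + 1) / N)),
    ?_, ?_, ?_⟩
  · exact le_trans Finset.card_image_le (by simp)
  · intro j
    exact Finset.mem_image.2 ⟨rIdx N ((⇑y) j / R), Finset.mem_range.2 (rIdx_lt N hN _), rfl⟩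
  · rw [dist_eq_norm]
    apply lp.norm_le_of_forall_le (by positivity)
    intro j
    have hcoe : (⇑(y - (⟨g, hmem⟩ : LY))) j = (⇑y) j - g j := by
      rw [lp.coeFn_sub]; rfl
    rw [hcoe, Real.norm_eq_abs]
    have ht1 : |(⇑y) j / R| ≤ 1 := by
      rw [abs_div, abs_of_pos hR, div_le_one hR]; exact hy j
    rw [abs_le] at ht1
    have hkey := abs_sub_rVal N hN ht1.1 ht1.2
    have heq : (⇑y) j - g j = R * ((⇑y) j / R - rVal N ((⇑y) j / R)) := by
      rw [hg]; field_simp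
    rw [heq, abs_mul, abs_of_pos hR]
    calc R * |(⇑y) j / R - rVal N ((⇑y) j / R)| ≤ R * (1 / N) := by
          exact mul_le_mul_of_nonneg_left hkey hR.le
      _ = R / N := by ring

/-- the witness for strictness of inclusions -/
def ywitf (n : ℕ) : ℕ → ℝ := fun j => if j % 2 = 1 then wf n (j / 2) else 0

lemma ywitf_mem (n : ℕ) : Memℓp (ywitf n) ∞ := by
  apply memℓp_infty
  refine ⟨1, ?_⟩
  rintro - ⟨j, rfl⟩
  simp only [ywitf, Real.norm_eq_abs]
  split
  · exact wf_abs_le _ _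
  · simp

def ywit (n : ℕ) : LY := ⟨ywitf n, ywitf_mem n⟩

lemma ywit_apply (n j : ℕ) : (⇑(ywit n)) j = ywitf n j := rfl

lemma ywit_mem_Aset (ε : ℕ → ℝ) (n : ℕ) : ywit n ∈ Aset ε (n + 1) := by
  constructor
  · refine ⟨{0}, fun h => by simp [Nat.one_le_iff_ne_zero.2 h], fun k => ?_⟩
    rw [ywit_apply]
    simp [ywitf, Nat.mul_mod_right]
  · refine ⟨{0}, fun i => if i = n then 1 else 0, fun i hi => if_neg (by omega), fun k => ?_⟩
    rw [ywit_apply]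
    have h1 : (2 * k + 1) % 2 = 1 := by omega
    have h2 : (2 * k + 1) / 2 = k := by omega
    simp only [ywitf, h1, if_pos rfl, h2]
    rw [if_pos trivial]
    have hsum : ∑ x ∈ Finset.range (n+1), (if x = n then (1:ℝ) else 0) * wf x k = wf n k := by
      rw [Finset.sum_eq_single n]
      · simp
      · intro b _ hb; rw [if_neg hb, zero_mul]
      · intro h; exact absurd (Finset.self_mem_range_succ n) h
    rw [hsum]; simp

lemma ywit_not_mem_Aset (ε : ℕ → ℝ) (n : ℕ) : ywit n ∉ Aset ε n := by
  rintro ⟨-, T, c, hc0, hval⟩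
  have hval' : ∀ k, wf n k - ∑ i ∈ Finset.range n, c i * wf i k ∈ T := by
    intro k
    have := hval k
    rw [ywit_apply] at this
    have h1 : (2 * k + 1) % 2 = 1 := by omega
    have h2 : (2 * k + 1) / 2 = k := by omega
    simpa [ywitf, h1, h2] using this
  -- pigeonhole: some value is attained infinitely often
  obtain ⟨⟨a, haT⟩, hfib⟩ := Finite.exists_infinite_fiber
    (fun k : ℕ => (⟨wf n k - ∑ i ∈ Finset.range n, c i * wf i k, hval' k⟩ : {x // x ∈ T}))
  set p : Polynomial ℝ :=
    Polynomial.X ^ (n + 1) - (∑ i ∈ Finset.range n, Polynomial.C (c i) * Polynomial.X ^ (i + 1))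
      - Polynomial.C a with hp
  have hroot : ∀ k, wf n k - ∑ i ∈ Finset.range n, c i * wf i k = a →
      p.IsRoot (1 / ((k:ℝ) + 2)) := by
    intro k hk
    rw [Polynomial.IsRoot, hp]
    simp only [Polynomial.eval_sub, Polynomial.eval_pow, Polynomial.eval_X,
      Polynomial.eval_finset_sum, Polynomial.eval_mul, Polynomial.eval_C]
    have : ∀ i, (1 / ((k:ℝ) + 2)) ^ (i + 1) = wf i k := fun i => rfl
    rw [this n]
    calc wf n k - (∑ i ∈ Finset.range n, c i * (1 / ((k:ℝ) + 2)) ^ (i + 1)) - a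
        = wf n k - (∑ i ∈ Finset.range n, c i * wf i k) - a := by
          congr 1
      _ = 0 := by rw [hk]; ring
  have hinj : Function.Injective (fun k : ℕ => 1 / ((k:ℝ) + 2)) := by
    intro a b hab
    simp only [one_div] at hab
    have := inv_injective hab
    exact_mod_cast add_right_cancel this
  have hinf : {x : ℝ | p.IsRoot x}.Infinite := by
    apply Set.Infinite.mono (s := (fun k : ℕ => 1 / ((k:ℝ) + 2)) ''
      ((fun k : ℕ => (⟨wf n k - ∑ i ∈ Finset.range n, c i * wf i k, hval' k⟩ : {x // x ∈ T}))
        ⁻¹' {⟨a, haT⟩}))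
    · rintro - ⟨k, hk, rfl⟩
      apply hroot
      have : (⟨wf n k - ∑ i ∈ Finset.range n, c i * wf i k, hval' k⟩ : {x // x ∈ T})
          = ⟨a, haT⟩ := hk
      exact congrArg Subtype.val this
    · exact Set.Infinite.image (Function.Injective.injOn hinj) (Set.infinite_coe_iff.mp hfib)
  have hp0 : p = 0 := Polynomial.eq_zero_of_infinite_isRoot p hinf
  have hcoeff : p.coeff (n + 1) = 1 := by
    rw [hp]
    simp only [Polynomial.coeff_sub, Polynomial.coeff_X_pow, if_pos rfl,
      Polynomial.finset_sum_coeff, Polynomial.coeff_C_mul, Polynomial.coeff_C]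
    have hz : ∀ i ∈ Finset.range n, c i * (if n + 1 = i + 1 then (1:ℝ) else 0) = 0 := by
      intro i hi
      rw [if_neg (by simp at hi; omega), mul_zero]
    rw [Finset.sum_congr rfl hz]
    simp
  rw [hp0] at hcoeff
  simp at hcoeff

/-- value enumeration: contains every grid `-1 + 2j/N` -/
def xval (m : ℕ) : ℝ :=
  -1 + 2 * ((min m.unpair.2 (m.unpair.1 + 1) : ℕ) : ℝ) / ((m.unpair.1 : ℝ) + 1)

lemma xval_bounds (m : ℕ) : -1 ≤ xval m ∧ xval m ≤ 1 := by
  have hN : (0:ℝ) < (m.unpair.1 : ℝ) + 1 := by positivity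
  have hmin : ((min m.unpair.2 (m.unpair.1 + 1) : ℕ) : ℝ) ≤ (m.unpair.1 : ℝ) + 1 := by
    exact_mod_cast (Nat.cast_le (α := ℝ)).2 (min_le_right _ _)
  have hmin0 : (0:ℝ) ≤ ((min m.unpair.2 (m.unpair.1 + 1) : ℕ) : ℝ) := Nat.cast_nonneg _
  constructor
  · have : (0:ℝ) ≤ 2 * ((min m.unpair.2 (m.unpair.1 + 1) : ℕ) : ℝ) / ((m.unpair.1 : ℝ) + 1) := by
      positivity
    rw [xval]; linarith
  · rw [xval]
    have : 2 * ((min m.unpair.2 (m.unpair.1 + 1) : ℕ) : ℝ) / ((m.unpair.1 : ℝ) + 1) ≤ 2 := by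
      rw [div_le_iff₀ hN]; linarith
    linarith

lemma xval_pair {N j : ℕ} (hN : 1 ≤ N) (hj : j ≤ N) :
    xval (Nat.pair (N - 1) j) = -1 + 2 * (j:ℝ) / N := by
  rw [xval, Nat.unpair_pair]
  have h1 : (N - 1) + 1 = N := by omega
  simp only [h1]
  rw [min_eq_left hj]
  have h2 : ((N - 1 : ℕ) : ℝ) + 1 = (N : ℝ) := by rw [cast_pred N hN]; ring
  rw [h2]

def xvecf : ℕ → ℝ := fun j => if j % 2 = 0 then xval (j / 2) else 0

lemma xvecf_mem : Memℓp xvecf ∞ := by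
  apply memℓp_infty
  refine ⟨1, ?_⟩
  rintro - ⟨j, rfl⟩
  simp only [xvecf, Real.norm_eq_abs]
  split
  · rw [abs_le]; constructor
    · exact (xval_bounds _).1
    · exact (xval_bounds _).2
  · simp

def xvec : LY := ⟨xvecf, xvecf_mem⟩

lemma xvec_apply_even (k : ℕ) : (⇑xvec) (2 * k) = xval k := by
  show xvecf (2 * k) = xval k
  have h1 : (2 * k) % 2 = 0 := by omega
  have h2 : (2 * k) / 2 = k := by omega
  simp [xvecf, h1, h2]

lemma norm_xvec : ‖xvec‖ = 1 := by
  apply le_antisymm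
  · apply lp.norm_le_of_forall_le (by norm_num : (0:ℝ) ≤ 1)
    intro i
    show ‖xvecf i‖ ≤ 1
    simp only [xvecf, Real.norm_eq_abs]
    split
    · rw [abs_le]; exact ⟨(xval_bounds _).1, (xval_bounds _).2⟩
    · simp
  · have h0 : (⇑xvec) 0 = -1 := by
      have := xvec_apply_even 0
      simp only [mul_zero] at this
      rw [this, xval]
      simp [Nat.unpair_zero]
    have := lp.norm_apply_le_norm (ENNReal.top_ne_zero) xvec 0
    rw [h0] at this
    have h1 : ‖(-1:ℝ)‖ = 1 := by norm_num
    rw [h1] at this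
    exact this

lemma nat_eq_of_abs_cast_lt_one {j j' : ℕ} (h : |(j:ℝ) - (j':ℝ)| < 1) : j = j' := by
  by_contra hne
  have hne' : (j:ℤ) ≠ (j':ℤ) := by exact_mod_cast hne
  have h1 : (1:ℤ) ≤ |(j:ℤ) - (j':ℤ)| := Int.one_le_abs (sub_ne_zero.2 hne')
  have h2 : (1:ℝ) ≤ |(j:ℝ) - (j':ℝ)| := by exact_mod_cast h1
  linarith

lemma dist_lower {ε : ℕ → ℝ} {n : ℕ} (hε : 0 < ε n) {z : LY} (hz : z ∈ Aset ε n) :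
    1 / (NN ε n : ℝ) ≤ dist xvec z := by
  by_contra hcon
  push_neg at hcon
  have hN1 : 1 ≤ NN ε n := NN_pos hε
  have hNpos : (0:ℝ) < (NN ε n : ℝ) := by exact_mod_cast hN1
  obtain ⟨S, hcard, hvS⟩ := hz.1
  have hcardN : S.card ≤ NN ε n := hcard (by omega)
  have hcoord : ∀ i, |(⇑xvec) i - (⇑z) i| ≤ dist xvec z := by
    intro i
    have h1 := lp.norm_apply_le_norm (ENNReal.top_ne_zero) (xvec - z) i
    rw [lp.coeFn_sub] at h1
    have h2 : (⇑xvec - ⇑z) i = (⇑xvec) i - (⇑z) i := rfl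
    rw [h2, Real.norm_eq_abs] at h1
    rw [dist_eq_norm]
    exact h1
  have hx : ∀ j ≤ NN ε n, (⇑xvec) (2 * Nat.pair (NN ε n - 1) j) = -1 + 2 * (j:ℝ) / NN ε n := by
    intro j hj
    rw [xvec_apply_even, xval_pair hN1 hj]
  have hkey : ∀ j ∈ Finset.range (NN ε n + 1),
      ∀ j' ∈ Finset.range (NN ε n + 1),
      (⇑z) (2 * Nat.pair (NN ε n - 1) j) = (⇑z) (2 * Nat.pair (NN ε n - 1) j') → j = j' := by
    intro j hj j' hj' heq
    have hjle : j ≤ NN ε n := by simpa using Nat.lt_succ_iff.1 (Finset.mem_range.1 hj)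
    have hj'le : j' ≤ NN ε n := by simpa using Nat.lt_succ_iff.1 (Finset.mem_range.1 hj')
    have d1 := hcoord (2 * Nat.pair (NN ε n - 1) j)
    have d2 := hcoord (2 * Nat.pair (NN ε n - 1) j')
    rw [hx j hjle] at d1
    rw [hx j' hj'le] at d2
    rw [heq] at d1
    apply nat_eq_of_abs_cast_lt_one
    have habs : |2 * (j:ℝ) / NN ε n - 2 * (j':ℝ) / NN ε n| < 2 / NN ε n := by
      calc |2 * (j:ℝ) / NN ε n - 2 * (j':ℝ) / NN ε n|
          = |((-1 + 2 * (j:ℝ) / NN ε n) - (⇑z) (2 * Nat.pair (NN ε n - 1) j'))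
            - ((-1 + 2 * (j':ℝ) / NN ε n) - (⇑z) (2 * Nat.pair (NN ε n - 1) j'))| := by
            congr 1; ring
        _ ≤ |(-1 + 2 * (j:ℝ) / NN ε n) - (⇑z) (2 * Nat.pair (NN ε n - 1) j')|
            + |(-1 + 2 * (j':ℝ) / NN ε n) - (⇑z) (2 * Nat.pair (NN ε n - 1) j')| :=
            abs_sub _ _
        _ < 1 / NN ε n + 1 / NN ε n := by
            apply add_lt_add (lt_of_le_of_lt d1 hcon) (lt_of_le_of_lt d2 hcon)
        _ = 2 / NN ε n := by ring
    have heq2 : |2 * (j:ℝ) / NN ε n - 2 * (j':ℝ) / NN ε n|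
        = 2 / NN ε n * |(j:ℝ) - (j':ℝ)| := by
      rw [← abs_of_pos (show (0:ℝ) < 2 / NN ε n by positivity), ← abs_mul]
      congr 1; field_simp
    rw [heq2] at habs
    have h2N : (0:ℝ) < 2 / NN ε n := by positivity
    nlinarith [abs_nonneg ((j:ℝ) - (j':ℝ))]
  have hle := Finset.card_le_card_of_injOn
    (fun j => (⇑z) (2 * Nat.pair (NN ε n - 1) j))
    (fun j _ => hvS (Nat.pair (NN ε n - 1) j))
    (fun j hj j' hj' heq => hkey j (Finset.mem_coe.1 hj) j' (Finset.mem_coe.1 hj') heq)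
  rw [Finset.card_range] at hle
  omega

lemma add_mem_Aset {ε : ℕ → ℝ} (hnonneg : ∀ m, 0 ≤ ε m) (hmono : Antitone ε) {n m : ℕ}
    (hnm : n ≤ m) (hNN : NN ε m = 0 ∨ NN ε n * NN ε n ≤ NN ε m)
    {y z : LY} (hy : y ∈ Aset ε n) (hz : z ∈ Aset ε n) : y + z ∈ Aset ε m := by
  obtain ⟨⟨S1, hc1, hm1⟩, ⟨T1, c1, hz1, hq1⟩⟩ := hy
  obtain ⟨⟨S2, hc2, hm2⟩, ⟨T2, c2, hz2, hq2⟩⟩ := hz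
  constructor
  · refine ⟨Finset.image₂ (· + ·) S1 S2, ?_, ?_⟩
    · intro h0
      rcases hNN with h | h
      · exact absurd h h0
      · have hn0 : NN ε n ≠ 0 := fun hz0 => h0 (NN_zero_mono hnonneg hmono hnm hz0)
        calc (Finset.image₂ (· + ·) S1 S2).card ≤ S1.card * S2.card :=
              Finset.card_image₂_le _ _ _
          _ ≤ NN ε n * NN ε n := Nat.mul_le_mul (hc1 hn0) (hc2 hn0)
          _ ≤ NN ε m := h
    · intro k
      have hadd : (⇑(y + z)) (2 * k) = (⇑y) (2 * k) + (⇑z) (2 * k) := by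
        rw [lp.coeFn_add]; rfl
      rw [hadd]
      exact Finset.mem_image₂_of_mem (hm1 k) (hm2 k)
  · refine ⟨Finset.image₂ (· + ·) T1 T2, c1 + c2, fun i hi => by
      simp only [Pi.add_apply, hz1 i (le_trans hnm hi), hz2 i (le_trans hnm hi), add_zero],
      fun k => ?_⟩
    have hz12 : ∀ i, m ≤ i → (c1 + c2) i = 0 := fun i hi => by
      simp only [Pi.add_apply, hz1 i (le_trans hnm hi), hz2 i (le_trans hnm hi), add_zero]
    have hs1 := qcond_sum_eq hnm c1 hz1 (k := k)
    have hs2 := qcond_sum_eq hnm c2 hz2 (k := k)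
    have happ : (⇑(y + z)) (2 * k + 1) = (⇑y) (2 * k + 1) + (⇑z) (2 * k + 1) := by
      rw [lp.coeFn_add]; rfl
    have hrw : (⇑(y + z)) (2 * k + 1) - ∑ i ∈ Finset.range m, (c1 + c2) i * wf i k
        = ((⇑y) (2 * k + 1) - ∑ i ∈ Finset.range n, c1 i * wf i k)
          + ((⇑z) (2 * k + 1) - ∑ i ∈ Finset.range n, c2 i * wf i k) := by
      rw [happ, ← hs1, ← hs2]
      simp only [Pi.add_apply, add_mul, Finset.sum_add_distrib]
      ring
    rw [hrw]
    exact Finset.mem_image₂_of_mem (hq1 k) (hq2 k)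

lemma smul_mem_Aset {ε : ℕ → ℝ} {n : ℕ} (c : ℝ) {y : LY} (hy : y ∈ Aset ε n) :
    c • y ∈ Aset ε n := by
  obtain ⟨⟨S1, hc1, hm1⟩, ⟨T1, c1, hz1, hq1⟩⟩ := hy
  constructor
  · refine ⟨S1.image (fun v => c * v), fun h0 => le_trans Finset.card_image_le (hc1 h0),
      fun k => ?_⟩
    have hap : (⇑(c • y)) (2 * k) = c * (⇑y) (2 * k) := by
      rw [lp.coeFn_smul]; rfl
    rw [hap]
    exact Finset.mem_image_of_mem _ (hm1 k)
  · refine ⟨T1.image (fun v => c * v), fun i => c * c1 i,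
      fun i hi => by simp only [hz1 i hi, mul_zero], fun k => ?_⟩
    have hap : (⇑(c • y)) (2 * k + 1) = c * (⇑y) (2 * k + 1) := by
      rw [lp.coeFn_smul]; rfl
    have hrw : (⇑(c • y)) (2 * k + 1) - ∑ i ∈ Finset.range n, (c * c1 i) * wf i k
        = c * ((⇑y) (2 * k + 1) - ∑ i ∈ Finset.range n, c1 i * wf i k) := by
      rw [hap, mul_sub, Finset.mul_sum]
      congr 1
      apply Finset.sum_congr rfl
      intro i _
      ring
    rw [hrw]
    exact Finset.mem_image_of_mem _ (hq1 k)

lemma exists_K {ε : ℕ → ℝ} (hnonneg : ∀ m, 0 ≤ ε m) (hmono : Antitone ε)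
    (hlim : Tendsto ε atTop (nhds 0)) (n : ℕ) :
    ∃ m, n ≤ m ∧ (NN ε m = 0 ∨ NN ε n * NN ε n ≤ NN ε m) := by
  rcases Nat.eq_zero_or_pos (NN ε n) with h0 | hpos
  · exact ⟨n, le_refl n, Or.inl (NN_zero_mono hnonneg hmono (le_refl n) h0)⟩
  · have hδ : (0:ℝ) < 1 / ((NN ε n * NN ε n : ℕ) + 1) := by positivity
    obtain ⟨m₀, hm₀⟩ := (eventually_atTop).1 (hlim.eventually_lt_const hδ)
    refine ⟨max n m₀, le_max_left _ _, ?_⟩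
    have hεm : ε (max n m₀) < 1 / ((NN ε n * NN ε n : ℕ) + 1) := hm₀ _ (le_max_right _ _)
    rcases lt_or_eq_of_le (hnonneg (max n m₀)) with hp | hp
    · right
      have hNNm : NN ε (max n m₀) = ⌈1 / ε (max n m₀)⌉₊ := by rw [NN, if_pos hp]
      rw [hNNm]
      have hlt : ((NN ε n * NN ε n : ℕ) : ℝ) < 1 / ε (max n m₀) := by
        rw [lt_div_iff₀ hp]
        have h1 : ε (max n m₀) * (((NN ε n * NN ε n : ℕ) : ℝ) + 1) < 1 := by
          rw [← lt_div_iff₀ (by positivity : (0:ℝ) < ((NN ε n * NN ε n : ℕ) : ℝ) + 1)]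
          exact hεm
        nlinarith [hp.le, Nat.cast_nonneg (α := ℝ) (NN ε n * NN ε n)]
      exact le_of_lt (Nat.lt_ceil.2 hlt)
    · left
      rw [NN, if_neg (by rw [← hp]; exact lt_irrefl 0)]


lemma coord_abs_le_norm (y : LY) (j : ℕ) : |(⇑y) j| ≤ ‖y‖ := by
  have := lp.norm_apply_le_norm (ENNReal.top_ne_zero) y j
  rwa [Real.norm_eq_abs] at this

lemma infDist_le_eps {ε : ℕ → ℝ} (hnonneg : ∀ m, 0 ≤ ε m) (n : ℕ) (u : LY) (hu : ‖u‖ = 1) :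
    infDist u (Aset ε n) ≤ ε n := by
  have hub : ∀ j, |(⇑u) j| ≤ 1 := fun j => by
    have := coord_abs_le_norm u j; rwa [hu] at this
  rcases lt_or_eq_of_le (hnonneg n) with hp | hp
  · obtain ⟨z, S, hcard, hval, hdist⟩ := exists_approx u 1 one_pos hub (NN ε n) (NN_pos hp)
    have hzmem : z ∈ Aset ε n := mem_Aset_of_finset z S (fun _ => hcard) hval
    calc infDist u (Aset ε n) ≤ dist u z := infDist_le_dist_of_mem hzmem
      _ ≤ 1 / NN ε n := by simpa using hdist
      _ ≤ ε n := one_div_NN_le hp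
  · have hNN0 : NN ε n = 0 := by rw [NN, if_neg (by rw [← hp]; exact lt_irrefl 0)]
    apply _root_.le_of_forall_pos_le_add
    intro δ hδ
    set N : ℕ := ⌈1 / δ⌉₊ + 1 with hN
    have hN1 : 1 ≤ N := by omega
    have hNR : 1 / δ ≤ (N : ℝ) := by
      calc 1 / δ ≤ (⌈1 / δ⌉₊ : ℝ) := Nat.le_ceil _
        _ ≤ (N : ℝ) := by exact_mod_cast Nat.le_succ _
    obtain ⟨z, S, hcard, hval, hdist⟩ := exists_approx u 1 one_pos hub N hN1
    have hzmem : z ∈ Aset ε n := mem_Aset_of_finset z S (fun h0 => absurd hNN0 h0) hval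
    have hNpos : (0:ℝ) < N := by exact_mod_cast hN1
    calc infDist u (Aset ε n) ≤ dist u z := infDist_le_dist_of_mem hzmem
      _ ≤ 1 / N := by simpa using hdist
      _ ≤ δ := by
          rw [div_le_iff₀ hNpos]
          rw [div_le_iff₀ hδ] at hNR
          linarith
      _ ≤ ε n + δ := by rw [← hp]; simp

lemma dense_union_Aset {ε : ℕ → ℝ} (hnonneg : ∀ m, 0 ≤ ε m)
    (hlim : Tendsto ε atTop (nhds 0)) : Dense (⋃ n, Aset ε n) := by
  rw [Metric.dense_iff]
  intro y r hr
  set R : ℝ := ‖y‖ + 1 with hRdef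
  have hR : 0 < R := by have := norm_nonneg y; rw [hRdef]; linarith
  have hyR : ∀ j, |(⇑y) j| ≤ R := fun j =>
    le_trans (coord_abs_le_norm y j) (by rw [hRdef]; linarith)
  have hr2R : (0:ℝ) < r / (2 * R) := by positivity
  obtain ⟨m₀, hm₀⟩ := eventually_atTop.1 (hlim.eventually_lt_const hr2R)
  have hεn : ε m₀ < r / (2 * R) := hm₀ _ (le_refl _)
  rcases lt_or_eq_of_le (hnonneg m₀) with hp | hp
  · obtain ⟨z, S, hcard, hval, hdist⟩ := exists_approx y R hR hyR (NN ε m₀) (NN_pos hp)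
    have hzmem : z ∈ Aset ε m₀ := mem_Aset_of_finset z S (fun _ => hcard) hval
    refine ⟨z, ?_, Set.mem_iUnion.2 ⟨m₀, hzmem⟩⟩
    rw [Metric.mem_ball, dist_comm]
    calc dist y z ≤ R / NN ε m₀ := hdist
      _ = R * (1 / NN ε m₀) := by ring
      _ ≤ R * ε m₀ := by
          apply mul_le_mul_of_nonneg_left (one_div_NN_le hp) hR.le
      _ < R * (r / (2 * R)) := by
          apply mul_lt_mul_of_pos_left hεn hR
      _ = r / 2 := by field_simp
      _ < r := by linarith
  · have hNN0 : NN ε m₀ = 0 := by rw [NN, if_neg (by rw [← hp]; exact lt_irrefl 0)]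
    set N : ℕ := ⌈2 * R / r⌉₊ + 1 with hN
    have hN1 : 1 ≤ N := by omega
    have hNR : 2 * R / r ≤ (N : ℝ) := by
      calc 2 * R / r ≤ (⌈2 * R / r⌉₊ : ℝ) := Nat.le_ceil _
        _ ≤ (N : ℝ) := by exact_mod_cast Nat.le_succ _
    have hNpos : (0:ℝ) < N := by exact_mod_cast hN1
    obtain ⟨z, S, hcard, hval, hdist⟩ := exists_approx y R hR hyR N hN1
    have hzmem : z ∈ Aset ε m₀ := mem_Aset_of_finset z S (fun h0 => absurd hNN0 h0) hval
    refine ⟨z, ?_, Set.mem_iUnion.2 ⟨m₀, hzmem⟩⟩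
    rw [Metric.mem_ball, dist_comm]
    calc dist y z ≤ R / N := hdist
      _ < r := by
          rw [div_lt_iff₀ hNpos]
          rw [div_le_iff₀ hr] at hNR
          linarith

end
end Stmt12Aux

open ENNReal in
theorem stmt12 (ε : ℕ → ℝ) (hnonneg : ∀ n, 0 ≤ ε n) (hone : ε 1 ≤ 1)
    (hmono : Antitone ε) (hlim : Tendsto ε atTop (nhds 0)) :
    ∃ (A : ℕ → Set (lp (fun _ : ℕ => ℝ) ∞)) (K : ℕ → ℕ),
      IsApproximationScheme A K ∧
      (∀ n, 1 ≤ n → sphDist (A n) ≤ ε n) ∧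
      ∃ x : lp (fun _ : ℕ => ℝ) ∞, ‖x‖ = 1 ∧
        ∀ n, 1 ≤ n → ε n / (1 + ε n) ≤ infDist x (A n) ∧
          ε n / 2 ≤ infDist x (A n) := by
  classical
  refine ⟨Stmt12Aux.Aset ε, fun n => (Stmt12Aux.exists_K hnonneg hmono hlim n).choose,
    ?_, ?_, ?_⟩
  · refine ⟨fun n => Stmt12Aux.Aset_subset hnonneg hmono (Nat.le_succ n),
      fun n heq => Stmt12Aux.ywit_not_mem_Aset ε n
        (by rw [heq]; exact Stmt12Aux.ywit_mem_Aset ε n),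
      fun n => (Stmt12Aux.exists_K hnonneg hmono hlim n).choose_spec.1,
      fun n y hy z hz => Stmt12Aux.add_mem_Aset hnonneg hmono
        (Stmt12Aux.exists_K hnonneg hmono hlim n).choose_spec.1
        (Stmt12Aux.exists_K hnonneg hmono hlim n).choose_spec.2 hy hz,
      fun n c y hy => Stmt12Aux.smul_mem_Aset c hy,
      Stmt12Aux.dense_union_Aset hnonneg hlim⟩
  · intro n _
    haveI : Nonempty {x : lp (fun _ : ℕ => ℝ) ∞ // ‖x‖ = 1} :=
      ⟨⟨Stmt12Aux.xvec, Stmt12Aux.norm_xvec⟩⟩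
    show (⨆ x : {x : lp (fun _ : ℕ => ℝ) ∞ // ‖x‖ = 1},
      infDist (x : lp (fun _ : ℕ => ℝ) ∞) (Stmt12Aux.Aset ε n)) ≤ ε n
    exact ciSup_le fun u => Stmt12Aux.infDist_le_eps hnonneg n u.1 u.2
  · refine ⟨Stmt12Aux.xvec, Stmt12Aux.norm_xvec, ?_⟩
    intro n hn
    rcases lt_or_eq_of_le (hnonneg n) with hp | hp
    · have hNpos : (0:ℝ) < (Stmt12Aux.NN ε n : ℝ) := by
        exact_mod_cast Stmt12Aux.NN_pos hp
      have hlow : 1 / (Stmt12Aux.NN ε n : ℝ) ≤ infDist Stmt12Aux.xvec (Stmt12Aux.Aset ε n) := by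
        by_contra hlt
        push_neg at hlt
        obtain ⟨z, hzmem, hzd⟩ :=
          (infDist_lt_iff ⟨0, Stmt12Aux.zero_mem_Aset⟩).1 hlt
        exact absurd hzd (not_lt.2 (Stmt12Aux.dist_lower hp hzmem))
      have hceil : (Stmt12Aux.NN ε n : ℝ) < (1 + ε n) / ε n := by
        have h1 : (⌈1 / ε n⌉₊ : ℝ) < 1 / ε n + 1 := Nat.ceil_lt_add_one (by positivity)
        have h2 : Stmt12Aux.NN ε n = ⌈1 / ε n⌉₊ := by rw [Stmt12Aux.NN, if_pos hp]
        have h3 : 1 / ε n + 1 = (1 + ε n) / ε n := by field_simp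
        rw [h2]
        linarith
      have hfrac : ε n / (1 + ε n) ≤ 1 / (Stmt12Aux.NN ε n : ℝ) := by
        have h4 := one_div_lt_one_div_of_lt hNpos hceil
        rw [one_div_div] at h4
        linarith
      have hε1 : ε n ≤ 1 := le_trans (hmono hn) hone
      have hhalf : ε n / 2 ≤ ε n / (1 + ε n) := by
        rw [div_le_div_iff₀ (by norm_num) (by positivity)]
        nlinarith
      exact ⟨le_trans hfrac hlow, le_trans hhalf (le_trans hfrac hlow)⟩
    · constructor
      · rw [← hp]
        simpa using infDist_nonneg
      · rw [← hp]
        simpa using infDist_nonneg
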